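/- In any ordered field F and any c > 0, there is no non-degenerate triangle all of whose sides have squared slope c. Precisely: if x, y, z ∈ F^d satisfy c·(x₁-y₁)² = Σᵢ₌₂^d (xᵢ-yᵢ)², c·(y₁-z₁)² = Σᵢ₌₂^d (yᵢ-zᵢ)², and c·(z₁-x₁)² = Σᵢ₌₂^d (zᵢ-xᵢ)², then x, y, z are collinear. -/

import Mathlib

/-- In any ordered field `F` and any `c > 0`, there is no non-degenerate triangle all of whose
sides have squared slope `c`: if each pair among `x, y, z ∈ F^d` satisfies
`c·(time difference)² = squared spatial distance`, then `x, y, z` are collinear. -/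
theorem stmt_2 {F : Type*} [Field F] [LinearOrder F] [IsStrictOrderedRing F] {d : ℕ} (c : F) (hc : 0 < c)
    (x y z : Fin (d + 2) → F)
    (hxy : c * (x 0 - y 0) ^ 2 = ∑ i ∈ Finset.univ.erase 0, (x i - y i) ^ 2)
    (hyz : c * (y 0 - z 0) ^ 2 = ∑ i ∈ Finset.univ.erase 0, (y i - z i) ^ 2)
    (hzx : c * (z 0 - x 0) ^ 2 = ∑ i ∈ Finset.univ.erase 0, (z i - x i) ^ 2) :
    Collinear F ({x, y, z} : Set (Fin (d + 2) → F)) := by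
  set E := (Finset.univ.erase (0 : Fin (d + 2))) with hE
  set a : Fin (d + 2) → F := fun i => x i - y i with ha
  set b : Fin (d + 2) → F := fun i => y i - z i with hb
  have hxy' : ∑ i ∈ E, a i ^ 2 = c * a 0 ^ 2 := by
    rw [← hxy]
  have hyz' : ∑ i ∈ E, b i ^ 2 = c * b 0 ^ 2 := by
    rw [← hyz]
  have hzx' : c * (a 0 + b 0) ^ 2 = ∑ i ∈ E, (a i + b i) ^ 2 := by
    have h1 : c * (a 0 + b 0) ^ 2 = c * (z 0 - x 0) ^ 2 := by
      simp only [ha, hb]; ring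
    rw [h1, hzx]
    exact Finset.sum_congr rfl fun i _ => by simp only [ha, hb]; ring
  have hexp : ∑ i ∈ E, (a i + b i) ^ 2
      = ∑ i ∈ E, a i ^ 2 + 2 * ∑ i ∈ E, a i * b i + ∑ i ∈ E, b i ^ 2 := by
    rw [Finset.mul_sum, ← Finset.sum_add_distrib, ← Finset.sum_add_distrib]
    exact Finset.sum_congr rfl fun i _ => by ring
  have hS : ∑ i ∈ E, a i * b i = c * (a 0 * b 0) := by
    rw [hexp, hxy', hyz'] at hzx'
    nlinarith [hzx']
  have hTexp : ∑ i ∈ E, (a i * b 0 - b i * a 0) ^ 2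
      = b 0 ^ 2 * ∑ i ∈ E, a i ^ 2 - 2 * (a 0 * b 0) * ∑ i ∈ E, a i * b i
        + a 0 ^ 2 * ∑ i ∈ E, b i ^ 2 := by
    rw [Finset.mul_sum, Finset.mul_sum, Finset.mul_sum, ← Finset.sum_sub_distrib,
      ← Finset.sum_add_distrib]
    exact Finset.sum_congr rfl fun i _ => by ring
  have hT : ∑ i ∈ E, (a i * b 0 - b i * a 0) ^ 2 = 0 := by
    rw [hTexp, hxy', hyz', hS]; ring
  have hkey : ∀ i ∈ E, a i * b 0 = b i * a 0 := by
    intro i hi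
    have := (Finset.sum_eq_zero_iff_of_nonneg (fun i _ => sq_nonneg _)).mp hT i hi
    have := pow_eq_zero_iff (n := 2) (by norm_num) |>.mp this
    linarith [this]
  by_cases hb0 : b 0 = 0
  · -- then y = z
    have hSb : ∑ i ∈ E, b i ^ 2 = 0 := by rw [hyz', hb0]; ring
    have hbz : ∀ i, b i = 0 := by
      intro i
      rcases eq_or_ne i 0 with h | h
      · rw [h]; exact hb0
      · have hi : i ∈ E := Finset.mem_erase.mpr ⟨h, Finset.mem_univ i⟩
        have := (Finset.sum_eq_zero_iff_of_nonneg (fun i _ => sq_nonneg _)).mp hSb i hi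
        exact pow_eq_zero_iff (n := 2) (by norm_num) |>.mp this
    have hyzq : y = z := funext fun i => by
      have := hbz i; simp [hb] at this; linarith
    have : ({x, y, z} : Set (Fin (d + 2) → F)) = {x, y} := by
      rw [hyzq]; simp
    rw [this]
    exact collinear_pair F x y
  · set t : F := a 0 / b 0 with ht
    have hat : ∀ i, a i = t * b i := by
      intro i
      rcases eq_or_ne i 0 with h | h
      · rw [h, ht]; field_simp
      · have hi : i ∈ E := Finset.mem_erase.mpr ⟨h, Finset.mem_univ i⟩
        have := hkey i hi
        rw [ht]; field_simp; linarith [this]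
    apply (collinear_iff_of_mem (show y ∈ ({x, y, z} : Set (Fin (d + 2) → F)) by simp)).mpr
    refine ⟨y - z, ?_⟩
    intro p hp
    rcases hp with h | h | h
    · refine ⟨t, ?_⟩
      funext i
      have := hat i
      simp only [h, vadd_eq_add, Pi.add_apply, Pi.smul_apply, Pi.sub_apply, smul_eq_mul]
      simp [ha, hb] at this
      linarith
    · exact ⟨0, by simp [h]⟩
    · refine ⟨-1, ?_⟩
      funext i
      simp only [show p = z from h, vadd_eq_add, Pi.add_apply, Pi.smul_apply, Pi.sub_apply, smul_eq_mul]
      ring
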